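/- The class of freedom matroids is minor-closed: for any freedom matroid M = M(S_0,...,S_r) on S and any e ∈ S, both the deletion M\e and the contraction M/e are freedom matroids (each is the freedom matroid of a flag on S \ {e}). -/

import Mathlib

open Matroid Set



private lemma fm_chain_lemma {α : Type*} (t : ℕ) (ht : 1 ≤ t) : ∀ (T : Set α) (T' : Set α),
    T ⊆ T' → T'.Finite → t ≤ (T' \ T).ncard →
    ∃ X : ℕ → Set α, X 0 = T ∧ X t = T' ∧ (∀ s < t, X s ⊂ X (s + 1)) ∧
      (∀ s ≤ t, T ⊆ X s ∧ X s ⊆ T') ∧ (∀ s < t, (X s).ncard ≤ T.ncard + s) := by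
  induction t with
  | zero => omega
  | succ n ih =>
    intro T T' hTT hfin hcard
    have hDfin : (T' \ T).Finite := hfin.subset diff_subset
    have hne : (T' \ T).Nonempty := Set.nonempty_of_ncard_ne_zero (by omega)
    obtain ⟨x, hx⟩ := hne
    rcases Nat.eq_zero_or_pos n with hn | hn
    · subst hn
      refine ⟨fun s => if s = 0 then T else T', by simp, by simp, ?_, ?_, ?_⟩
      · intro s hs
        interval_cases s
        simp only [if_pos rfl, if_neg one_ne_zero]
        exact (ssubset_iff_of_subset hTT).2 ⟨x, hx.1, hx.2⟩
      · intro s hs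
        rcases Nat.eq_zero_or_pos s with h | h
        · simp [h, hTT]
        · have : s ≠ 0 := by omega
          simp [this, hTT]
      · intro s hs
        interval_cases s
        simp
    · have hsub : T ∪ {x} ⊆ T' := union_subset hTT (by simpa using hx.1)
      have hc2 : n ≤ (T' \ (T ∪ {x})).ncard := by
        have : T' \ (T ∪ {x}) = (T' \ T) \ {x} := by
          ext y; simp [and_comm]; tauto
        rw [this, ncard_diff_singleton_of_mem hx]
        omega
      obtain ⟨X, hX0, hXn, hXs, hXm, hXc⟩ := ih hn (T ∪ {x}) T' hsub hfin hc2
      refine ⟨fun s => if s = 0 then T else X (s - 1), by simp, ?_, ?_, ?_, ?_⟩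
      · simpa using hXn
      · intro s hs
        rcases Nat.eq_zero_or_pos s with h | h
        · subst h
          simp only [if_pos rfl, if_neg one_ne_zero]
          rw [show 1 - 1 = 0 by rfl, hX0]
          exact (ssubset_iff_of_subset subset_union_left).2 ⟨x, by simp, hx.2⟩
        · have h1 : s ≠ 0 := by omega
          have h2 : s + 1 ≠ 0 := by omega
          simp only [if_neg h1, if_neg h2]
          have := hXs (s - 1) (by omega)
          have heq : s + 1 - 1 = (s - 1) + 1 := by omega
          rw [heq]
          exact this
      · intro s hs
        rcases Nat.eq_zero_or_pos s with h | h
        · simp [h, hTT]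
        · have h1 : s ≠ 0 := by omega
          simp only [if_neg h1]
          have := hXm (s - 1) (by omega)
          exact ⟨subset_union_left.trans this.1, this.2⟩
      · intro s hs
        rcases Nat.eq_zero_or_pos s with h | h
        · simp [h]
        · have h1 : s ≠ 0 := by omega
          simp only [if_neg h1]
          have := hXc (s - 1) (by omega)
          have hle : (T ∪ {x}).ncard ≤ T.ncard + 1 := by
            rw [union_singleton]
            exact ncard_insert_le x T
          omega


private lemma fm_mono {α : Type*} {A : ℕ → Set α} {m : ℕ} (h : ∀ i < m, A i ⊆ A (i + 1)) :
    ∀ i j, i ≤ j → j ≤ m → A i ⊆ A j := by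
  intro i j hij hjm
  induction j with
  | zero => simpa [Nat.le_zero.1 hij]
  | succ n ihn =>
    rcases Nat.lt_or_ge i (n + 1) with h1 | h1
    · exact (ihn (by omega) (by omega)).trans (h n (by omega))
    · have : i = n + 1 := by omega
      simp [this]

private lemma fm_norm {α : Type*} (m : ℕ) (A : ℕ → Set α) (hfin : (A m).Finite)
    (hmono : ∀ i < m, A i ⊆ A (i + 1)) :
    ∃ r', r' ≤ m ∧ ∃ G : ℕ → Set α, G r' = A m ∧ (∀ i < r', G i ⊂ G (i + 1)) ∧
      (∀ i ≤ r', G i ⊆ A m) ∧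
      ∀ I, I ⊆ A m →
        ((∀ i ≤ m, (I ∩ A i).ncard ≤ i) ↔ (∀ i ≤ r', (I ∩ G i).ncard ≤ i)) := by
  induction m with
  | zero =>
    refine ⟨0, le_refl 0, A, rfl, by omega, by intro i hi; simp [Nat.le_zero.1 hi], ?_⟩
    intro I hI
    constructor <;> (intro h i hi; exact h i hi)
  | succ m ih =>
    have hmono' : ∀ i < m, A i ⊆ A (i + 1) := fun i hi => hmono i (by omega)
    have hAm : A m ⊆ A (m + 1) := hmono m (by omega)
    have hfinm : (A m).Finite := hfin.subset hAm
    obtain ⟨r', hr', G, hGr, hGstrict, hGsub, hGiff⟩ := ih hfinm hmono'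
    set D := A (m + 1) \ A m with hD
    have hDfin : D.Finite := hfin.subset diff_subset
    set t := min D.ncard (m + 1 - r') with htdef
    -- helper: I ∩ A i = (I ∩ A m) ∩ A i for i ≤ m
    have hsub_all : ∀ i ≤ m, A i ⊆ A m := fun i hi => fm_mono hmono' i m hi le_rfl
    rcases Nat.eq_zero_or_pos t with ht0 | ht1
    · -- t = 0 means D empty, A (m+1) = A m
      have hd0 : D.ncard = 0 := by omega
      have hDe : D = ∅ := (ncard_eq_zero hDfin).1 hd0
      have hAe : A (m + 1) = A m := by
        apply Subset.antisymm _ hAm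
        intro x hx
        by_contra hc
        exact absurd (show x ∈ D from ⟨hx, hc⟩) (by simp [hDe])
      refine ⟨r', by omega, G, by rw [hGr, hAe], hGstrict, fun i hi => (hGsub i hi).trans hAm, ?_⟩
      intro I hI
      have hI' : I ⊆ A m := by rw [← hAe]; exact hI
      constructor
      · intro h
        exact (hGiff I hI').1 (fun i hi => h i (by omega))
      · intro h i hi
        rcases le_or_gt i m with h1 | h1
        · exact (hGiff I hI').2 h i h1
        · have hieq : i = m + 1 := by omega
          subst hieq
          rw [hAe]
          exact le_trans ((hGiff I hI').2 h m le_rfl) (by omega)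
    · -- t ≥ 1
      have htD : t ≤ D.ncard := min_le_left _ _
      have htm : t ≤ m + 1 - r' := min_le_right _ _
      obtain ⟨X, hX0, hXt, hXstrict, hXmid, hXcard⟩ :=
        fm_chain_lemma t ht1 (A m) (A (m + 1)) hAm hfin (by rw [← hD]; exact htD)
      refine ⟨r' + t, by omega, fun i => if i ≤ r' then G i else X (i - r'), ?_, ?_, ?_, ?_⟩
      · have : ¬ r' + t ≤ r' := by omega
        simp only [if_neg this]
        rw [show r' + t - r' = t by omega, hXt]
      · intro i hi
        rcases Nat.lt_or_ge i r' with h1 | h1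
        · have e1 : i ≤ r' := by omega
          have e2 : i + 1 ≤ r' := by omega
          simp only [if_pos e1, if_pos e2]
          exact hGstrict i h1
        · rcases Nat.eq_or_lt_of_le h1 with h2 | h2
          · have e1 : i ≤ r' := le_of_eq h2.symm
            have e2 : ¬ i + 1 ≤ r' := by omega
            simp only [if_pos e1, if_neg e2]
            rw [show i + 1 - r' = 1 from by omega, ← h2, hGr, ← hX0]
            exact hXstrict 0 ht1
          · have e1 : ¬ i ≤ r' := by omega
            have e2 : ¬ i + 1 ≤ r' := by omega
            simp only [if_neg e1, if_neg e2, show i + 1 - r' = (i - r') + 1 from by omega]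
            exact hXstrict (i - r') (by omega)
      · intro i hi
        rcases le_or_gt i r' with h1 | h1
        · simp only [if_pos h1]
          exact (hGsub i h1).trans hAm
        · simp only [if_neg (by omega : ¬ i ≤ r')]
          exact (hXmid (i - r') (by omega)).2
      · intro I hI
        set I₀ := I ∩ A m with hI₀
        have hI₀sub : I₀ ⊆ A m := inter_subset_right
        have hIA : ∀ i ≤ m, I ∩ A i = I₀ ∩ A i := by
          intro i hi
          rw [hI₀, inter_assoc, inter_eq_self_of_subset_right (hsub_all i hi)]
        have hIG : ∀ i ≤ r', I ∩ G i = I₀ ∩ G i := by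
          intro i hi
          rw [hI₀, inter_assoc, inter_eq_self_of_subset_right (hGsub i hi)]
        constructor
        · intro h i hi
          have hflag : ∀ i ≤ r', (I₀ ∩ G i).ncard ≤ i :=
            (hGiff I₀ hI₀sub).1 (fun i hi => by rw [← hIA i hi]; exact h i (by omega))
          have hIAm : (I ∩ A m).ncard ≤ r' := by
            have h5 := hflag r' le_rfl
            rw [hGr, hI₀, inter_assoc, inter_self] at h5
            exact h5
          rcases le_or_gt i r' with h1 | h1
          · simp only [if_pos h1]
            rw [hIG i h1]; exact hflag i h1
          · simp only [if_neg (by omega : ¬ i ≤ r')]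
            set s := i - r' with hs
            rcases Nat.lt_or_ge s t with h2 | h2
            · -- interior: |I ∩ X s| ≤ |I ∩ A m| + s
              have hcover : I ∩ X s ⊆ (I ∩ A m) ∪ (X s \ A m) := by
                intro x hx
                by_cases hxa : x ∈ A m
                · exact Or.inl ⟨hx.1, hxa⟩
                · exact Or.inr ⟨hx.2, hxa⟩
              have hXsfin : (X s).Finite := hfin.subset (hXmid s (by omega)).2
              have c1 : (I ∩ X s).ncard ≤ (I ∩ A m).ncard + (X s \ A m).ncard :=
                le_trans (ncard_le_ncard hcover ((hfinm.inter_of_right I).union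
                  (hXsfin.subset diff_subset))) (ncard_union_le _ _)
              have c2 : (X s \ A m).ncard = (X s).ncard - (A m).ncard :=
                ncard_diff (hXmid s (by omega)).1 hfinm
              have c3 : (X s).ncard ≤ (A m).ncard + s := hXcard s h2
              have c4 : (A m).ncard ≤ (X s).ncard := ncard_le_ncard (hXmid s (by omega)).1 hXsfin
              omega
            · -- top: s = t
              have hst : s = t := by omega
              rw [hst, hXt]
              have hIeq : I ∩ A (m + 1) = I := inter_eq_self_of_subset_left hI
              rw [hIeq]
              have b1 : I.ncard ≤ (I ∩ A m).ncard + D.ncard := by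
                have hiud : (I ∩ A m) ∪ (I \ A m) = I := inter_union_diff I (A m)
                have u1 : I.ncard ≤ (I ∩ A m).ncard + (I \ A m).ncard := by
                  conv_lhs => rw [← hiud]
                  exact ncard_union_le _ _
                have u2 : (I \ A m).ncard ≤ D.ncard :=
                  ncard_le_ncard (fun x hx => ⟨hI hx.1, hx.2⟩) hDfin
                omega
              have b2 : I.ncard ≤ m + 1 := by
                have := h (m + 1) le_rfl
                rwa [hIeq] at this
              omega
        · intro h i hi
          have hflag : ∀ i ≤ r', (I₀ ∩ G i).ncard ≤ i := by
            intro i h1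
            rw [← hIG i h1]
            have := h i (by omega)
            simpa only [if_pos h1] using this
          rcases le_or_gt i m with h1 | h1
          · rw [hIA i h1]
            exact (hGiff I₀ hI₀sub).2 hflag i h1
          · have hieq : i = m + 1 := by omega
            subst hieq
            rw [inter_eq_self_of_subset_left hI]
            have := h (r' + t) le_rfl
            simp only [if_neg (by omega : ¬ r' + t ≤ r'),
              show r' + t - r' = t from by omega, hXt,
              inter_eq_self_of_subset_left hI] at this
            omega


section helpers
variable {α : Type*}

private lemma fm_key3 {I B : Set α} {e : α} (he : e ∉ I) : I ∩ (B \ {e}) = I ∩ B := by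
  ext x
  simp only [mem_inter_iff, mem_diff, mem_singleton_iff]
  constructor
  · rintro ⟨h1, h2, _⟩; exact ⟨h1, h2⟩
  · rintro ⟨h1, h2⟩; exact ⟨h1, h2, fun h => he (h ▸ h1)⟩

private lemma fm_key2 {I B : Set α} {e : α} (he : e ∉ B) : (I ∪ {e}) ∩ B = I ∩ B := by
  ext x
  simp only [mem_inter_iff, mem_union, mem_singleton_iff]
  constructor
  · rintro ⟨h1 | h1, h2⟩
    · exact ⟨h1, h2⟩
    · exact absurd (h1 ▸ h2) he
  · rintro ⟨h1, h2⟩; exact ⟨Or.inl h1, h2⟩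

private lemma fm_key1 {I B : Set α} {e : α} (heB : e ∈ B) (heI : e ∉ I) (hfin : I.Finite) :
    ((I ∪ {e}) ∩ B).ncard = (I ∩ B).ncard + 1 := by
  have h1 : (I ∪ {e}) ∩ B = insert e (I ∩ B) := by
    ext x
    simp only [mem_inter_iff, mem_union, mem_singleton_iff, mem_insert_iff]
    constructor
    · rintro ⟨h1 | h1, h2⟩
      · exact Or.inr ⟨h1, h2⟩
      · exact Or.inl h1
    · rintro (rfl | ⟨h1, h2⟩)
      · exact ⟨Or.inr rfl, heB⟩
      · exact ⟨Or.inl h1, h2⟩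
  rw [h1, ncard_insert_of_notMem (fun h => heI h.1) (hfin.inter_of_left B)]
end helpers

/-- The class of freedom matroids is minor-closed: for any freedom matroid
`M = M(S₀,…,S_r)` on `S` and any `e ∈ S`, both the deletion `M \ e` (i.e. the restriction
`M ↾ (S \ {e})`) and the contraction `M/e` are freedom matroids — each is the freedom
matroid of a flag on `S \ {e}`.  The contraction `M/e` is characterized as the matroid `N`
with ground set `S \ {e}` in which `I` is independent iff `I ⊆ S \ {e}` and `I ∪ J` is
`M`-independent for some basis `J` of `{e}` in `M`. -/
theorem freedom_matroid_minor_closed {α : Type*} (S : Set α) (hS : S.Finite) (r : ℕ)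
    (F : ℕ → Set α) (hFr : F r = S) (hchain : ∀ i < r, F i ⊂ F (i + 1))
    (M : Matroid α) (hE : M.E = S)
    (hInd : ∀ I : Set α, M.Indep I ↔ I ⊆ S ∧ ∀ i ≤ r, (I ∩ F i).ncard ≤ i)
    (e : α) (he : e ∈ S)
    (N : Matroid α) (hNE : N.E = S \ {e})
    (hNInd : ∀ I : Set α, N.Indep I ↔ I ⊆ S \ {e} ∧
      ∃ J ⊆ ({e} : Set α), M.IsBasis J {e} ∧ M.Indep (I ∪ J)) :
    (∃ (r' : ℕ) (G : ℕ → Set α), G r' = S \ {e} ∧ (∀ i < r', G i ⊂ G (i + 1)) ∧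
      ∀ I : Set α, (M ↾ (S \ {e})).Indep I ↔
        I ⊆ S \ {e} ∧ ∀ i ≤ r', (I ∩ G i).ncard ≤ i) ∧
    (∃ (r' : ℕ) (G : ℕ → Set α), G r' = S \ {e} ∧ (∀ i < r', G i ⊂ G (i + 1)) ∧
      ∀ I : Set α, N.Indep I ↔
        I ⊆ S \ {e} ∧ ∀ i ≤ r', (I ∩ G i).ncard ≤ i) := by
  classical
  have Fmono : ∀ i j, i ≤ j → j ≤ r → F i ⊆ F j :=
    fm_mono (fun i hi => (hchain i hi).subset)
  have hFsubS : ∀ i ≤ r, F i ⊆ S := fun i hi => hFr ▸ Fmono i r hi le_rfl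
  -- The deletion flag (also used for contraction when e is a loop)
  set Ad : ℕ → Set α := fun i => F i \ {e} with hAd
  have hAdr : Ad r = S \ {e} := by rw [hAd]; simp only; rw [hFr]
  have hAdfin : (Ad r).Finite := by rw [hAdr]; exact hS.diff
  have hAdmono : ∀ i < r, Ad i ⊆ Ad (i + 1) :=
    fun i hi => diff_subset_diff_left (hchain i hi).subset
  obtain ⟨r₁, hr₁, G₁, hG₁r, hG₁strict, hG₁sub, hG₁iff⟩ := fm_norm r Ad hAdfin hAdmono
  rw [hAdr] at hG₁r hG₁sub hG₁iff
  -- The deletion characterization: for I ⊆ S \ {e},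
  -- M.Indep I ↔ flag constraints
  have hdel : ∀ I : Set α, I ⊆ S \ {e} →
      (M.Indep I ↔ ∀ i ≤ r₁, (I ∩ G₁ i).ncard ≤ i) := by
    intro I hI
    have heI : e ∉ I := fun h => (hI h).2 rfl
    have hIS : I ⊆ S := hI.trans diff_subset
    rw [hInd]
    constructor
    · rintro ⟨-, h2⟩
      refine (hG₁iff I hI).1 (fun i hi => ?_)
      rw [hAd]; simp only
      rw [fm_key3 heI]
      exact h2 i hi
    · intro h
      refine ⟨hIS, fun i hi => ?_⟩
      have := (hG₁iff I hI).2 h i hi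
      rw [hAd] at this; simp only at this
      rwa [fm_key3 heI] at this
  constructor
  · -- deletion
    refine ⟨r₁, G₁, hG₁r, hG₁strict, fun I => ?_⟩
    rw [restrict_indep_iff]
    constructor
    · rintro ⟨h1, h2⟩
      exact ⟨h2, (hdel I h2).1 h1⟩
    · rintro ⟨h1, h2⟩
      exact ⟨(hdel I h1).2 h2, h1⟩
  · -- contraction
    by_cases he0 : e ∈ F 0
    · -- e is a loop: contraction = deletion
      have hdep : ¬ M.Indep {e} := by
        rw [hInd]
        rintro ⟨-, h2⟩
        have := h2 0 (Nat.zero_le r)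
        rw [inter_eq_self_of_subset_left (singleton_subset_iff.2 he0),
          ncard_singleton] at this
        omega
      have hNInd' : ∀ I : Set α, N.Indep I ↔ I ⊆ S \ {e} ∧ M.Indep I := by
        intro I
        rw [hNInd]
        constructor
        · rintro ⟨h1, J, hJ, hB, hIJ⟩
          exact ⟨h1, hIJ.subset subset_union_left⟩
        · rintro ⟨h1, h2⟩
          obtain ⟨J, hJB⟩ := M.exists_isBasis {e}
            (by rw [hE]; exact singleton_subset_iff.2 he)
          have hJsub : J ⊆ {e} := hJB.subset
          have hJne : J ≠ {e} := fun h => hdep (h ▸ hJB.indep)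
          have hJempty : J = ∅ := by
            rcases subset_singleton_iff_eq.1 hJsub with h | h
            · exact h
            · exact absurd h hJne
          exact ⟨h1, J, hJsub, hJB, by rw [hJempty, union_empty]; exact h2⟩
      refine ⟨r₁, G₁, hG₁r, hG₁strict, fun I => ?_⟩
      rw [hNInd']
      constructor
      · rintro ⟨h1, h2⟩
        exact ⟨h1, (hdel I h1).1 h2⟩
      · rintro ⟨h1, h2⟩
        exact ⟨h1, (hdel I h1).2 h2⟩
    · -- e is not a loop
      have hr0 : 0 < r := by
        rcases Nat.eq_zero_or_pos r with h | h
        · exact absurd (h ▸ hFr ▸ he : e ∈ F 0) he0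
        · exact h
      have hIe : M.Indep {e} := by
        rw [hInd]
        refine ⟨singleton_subset_iff.2 he, fun i hi => ?_⟩
        rcases Nat.eq_zero_or_pos i with h | h
        · subst h
          have h0 : ({e} : Set α) ∩ F 0 = ∅ := by
            apply eq_empty_iff_forall_notMem.2
            rintro x ⟨hx1, hx2⟩
            rw [mem_singleton_iff] at hx1
            exact he0 (hx1 ▸ hx2)
          simp [h0]
        · calc (({e} : Set α) ∩ F i).ncard ≤ ({e} : Set α).ncard :=
                ncard_le_ncard inter_subset_left (finite_singleton e)
            _ = 1 := ncard_singleton e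
            _ ≤ i := h
      have hNInd'' : ∀ I : Set α, N.Indep I ↔ I ⊆ S \ {e} ∧ M.Indep (I ∪ {e}) := by
        intro I
        rw [hNInd]
        constructor
        · rintro ⟨h1, J, hJ, hB, hIJ⟩
          have : J = {e} := hB.eq_of_subset_indep hIe hJ subset_rfl
          exact ⟨h1, this ▸ hIJ⟩
        · rintro ⟨h1, h2⟩
          exact ⟨h1, {e}, subset_rfl, hIe.isBasis_self, h2⟩
      -- the contraction flag chain
      set Ac : ℕ → Set α := fun i => if e ∈ F (i + 1) then F (i + 1) \ {e} else F i with hAc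
      have hAcr : Ac (r - 1) = S \ {e} := by
        rw [hAc]; simp only
        rw [show r - 1 + 1 = r from by omega, hFr, if_pos (hFr ▸ he)]
      have hAcfin : (Ac (r - 1)).Finite := by rw [hAcr]; exact hS.diff
      have hAcmono : ∀ i < r - 1, Ac i ⊆ Ac (i + 1) := by
        intro i hi
        rw [hAc]; simp only
        by_cases h2 : e ∈ F (i + 1 + 1)
        · rw [if_pos h2]
          by_cases h1 : e ∈ F (i + 1)
          · rw [if_pos h1]
            exact diff_subset_diff_left (Fmono (i + 1) (i + 2) (by omega) (by omega))
          · rw [if_neg h1]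
            intro x hx
            refine ⟨Fmono i (i + 2) (by omega) (by omega) hx, ?_⟩
            rintro rfl
            exact h1 (Fmono i (i + 1) (by omega) (by omega) hx)
        · rw [if_neg h2]
          by_cases h1 : e ∈ F (i + 1)
          · exact absurd (Fmono (i + 1) (i + 2) (by omega) (by omega) h1) h2
          · rw [if_neg h1]
            exact Fmono i (i + 1) (by omega) (by omega)
      obtain ⟨r₂, hr₂, G₂, hG₂r, hG₂strict, hG₂sub, hG₂iff⟩ :=
        fm_norm (r - 1) Ac hAcfin hAcmono
      rw [hAcr] at hG₂r hG₂sub hG₂iff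
      refine ⟨r₂, G₂, hG₂r, hG₂strict, fun I => ?_⟩
      rw [hNInd'' I]
      constructor
      · rintro ⟨h1, h2⟩
        refine ⟨h1, ?_⟩
        have heI : e ∉ I := fun h => (h1 h).2 rfl
        have hIfin : I.Finite := hS.subset (h1.trans diff_subset)
        rw [hInd] at h2
        obtain ⟨-, h2⟩ := h2
        refine (hG₂iff I h1).1 (fun i hi => ?_)
        rw [hAc]; simp only
        by_cases hcase : e ∈ F (i + 1)
        · rw [if_pos hcase, fm_key3 heI]
          have hk := fm_key1 hcase heI hIfin
          have := h2 (i + 1) (by omega)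
          omega
        · rw [if_neg hcase]
          have heFi : e ∉ F i := fun h => hcase (Fmono i (i + 1) (by omega) (by omega) h)
          have := h2 i (by omega)
          rwa [fm_key2 heFi] at this
      · rintro ⟨h1, h2⟩
        refine ⟨h1, ?_⟩
        have heI : e ∉ I := fun h => (h1 h).2 rfl
        have hIfin : I.Finite := hS.subset (h1.trans diff_subset)
        have hA : ∀ i ≤ r - 1, (I ∩ Ac i).ncard ≤ i := (hG₂iff I h1).2 h2
        rw [hInd]
        refine ⟨union_subset (h1.trans diff_subset) (singleton_subset_iff.2 he), fun i hi => ?_⟩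
        by_cases hei : e ∈ F i
        · obtain ⟨k, rfl⟩ : ∃ k, i = k + 1 := by
            rcases Nat.eq_zero_or_pos i with h | h
            · exact absurd (h ▸ hei) he0
            · exact ⟨i - 1, by omega⟩
          have hk := fm_key1 hei heI hIfin
          have hAk := hA k (by omega)
          rw [hAc] at hAk; simp only at hAk
          rw [if_pos hei, fm_key3 heI] at hAk
          omega
        · rw [fm_key2 hei]
          have hir : i < r := by
            rcases Nat.lt_or_ge i r with h | h
            · exact h
            · have : i = r := by omega
              exact absurd (this ▸ hFr ▸ he : e ∈ F i) hei
          have hAi := hA i (by omega)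
          rw [hAc] at hAi; simp only at hAi
          by_cases hcase : e ∈ F (i + 1)
          · rw [if_pos hcase] at hAi
            calc (I ∩ F i).ncard ≤ (I ∩ (F (i + 1) \ {e})).ncard := by
                  refine ncard_le_ncard (inter_subset_inter_right I ?_)
                    ((hIfin.inter_of_left _))
                  intro x hx
                  exact ⟨Fmono i (i + 1) (by omega) (by omega) hx, fun h => hei (h ▸ hx)⟩
              _ ≤ i := hAi
          · rw [if_neg hcase] at hAi
            exact hAi
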